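/- arXiv:1101.1380 — 2 statements merged into one kernel-verified Lean document; each statement's English description precedes it below -/
import Mathlib

section
/- On the torus T² = ℂ/ℤ² with real structure c([z]) = [z̄] (which has two real components), there is no homotopically non-trivial simple closed curve a with c(a) = a on which c acts as a fixed-point-free (antipodal) involution. -/
/-!
STATEMENT 8: on T² = ℂ/ℤ² with the conjugation real structure c (two real
components), there is no homotopically non-trivial simple closed curve a with
c(a) = a on which c acts as a fixed-point-free (antipodal) involution.

A simple closed curve is formalized as an injective continuous map from the circle.
-/

noncomputable section
noncomputable section

/-- The Gaussian lattice ℤ + ℤi in ℂ. -/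
def GaussianLattice : AddSubgroup ℂ := AddSubgroup.closure {1, Complex.I}

/-- The torus ℂ/(ℤ + ℤi). -/
abbrev Torus : Type := ℂ ⧸ GaussianLattice

/-- Complex conjugation as an additive homomorphism. -/
def conjHom : ℂ →+ ℂ :=
  AddMonoidHom.mk' (fun z => (starRingEnd ℂ) z) (fun a b => by simp)

lemma conj_maps_lattice : GaussianLattice ≤ GaussianLattice.comap conjHom := by
  rw [GaussianLattice, AddSubgroup.closure_le]
  rintro z hz
  simp only [Set.mem_insert_iff, Set.mem_singleton_iff] at hz
  rcases hz with rfl | rfl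
  · refine AddSubgroup.mem_comap.mpr ?_
    have h : conjHom (1 : ℂ) = 1 := by simp [conjHom]
    rw [h]
    exact AddSubgroup.subset_closure (k := ({1, Complex.I} : Set ℂ)) (by simp)
  · refine AddSubgroup.mem_comap.mpr ?_
    have h : conjHom Complex.I = -Complex.I := by simp [conjHom]
    rw [h]
    exact neg_mem (AddSubgroup.subset_closure (k := ({1, Complex.I} : Set ℂ)) (by simp))

/-- The real structure on the torus induced by complex conjugation `z ↦ z̄`. -/
def torusConj : Torus → Torus :=
  QuotientAddGroup.map GaussianLattice GaussianLattice conjHom conj_maps_lattice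


def imHom : ℂ →+ ℝ := Complex.imAddGroupHom

lemma im_maps_lattice : GaussianLattice ≤ (AddSubgroup.zmultiples (1:ℝ)).comap imHom := by
  rw [GaussianLattice, AddSubgroup.closure_le]
  rintro z hz
  simp only [Set.mem_insert_iff, Set.mem_singleton_iff] at hz
  rcases hz with rfl | rfl
  · exact AddSubgroup.mem_comap.mpr (by simp [imHom, AddSubgroup.zero_mem])
  · refine AddSubgroup.mem_comap.mpr ?_
    have : imHom Complex.I = 1 := by simp [imHom]
    rw [this]
    exact AddSubgroup.mem_zmultiples 1

def torusIm : Torus → AddCircle (1:ℝ) :=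
  QuotientAddGroup.map GaussianLattice (AddSubgroup.zmultiples (1:ℝ)) imHom im_maps_lattice

lemma torusIm_mk (z : ℂ) : torusIm (QuotientAddGroup.mk z) = (z.im : AddCircle (1:ℝ)) :=
  rfl

lemma continuous_torusIm : Continuous torusIm := by
  rw [(QuotientAddGroup.isQuotientMap_mk GaussianLattice).continuous_iff]
  have : torusIm ∘ (QuotientAddGroup.mk : ℂ → Torus)
      = (QuotientAddGroup.mk : ℝ → AddCircle (1:ℝ)) ∘ Complex.im := by
    funext z; exact torusIm_mk z
  rw [this]
  exact continuous_quot_mk.comp Complex.continuous_im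

def fIm : AddCircle (1:ℝ) → ℝ := fun x => ((AddCircle.toCircle x : Circle) : ℂ).im

lemma continuous_fIm : Continuous fIm :=
  Complex.continuous_im.comp (continuous_subtype_val.comp AddCircle.continuous_toCircle)

lemma toCircle_neg (x : AddCircle (1:ℝ)) :
    AddCircle.toCircle (-x) = (AddCircle.toCircle x)⁻¹ := by
  have h : AddCircle.toCircle (x + -x) = AddCircle.toCircle x * AddCircle.toCircle (-x) :=
    AddCircle.toCircle_add x (-x)
  rw [add_neg_cancel, AddCircle.toCircle_zero] at h
  exact eq_inv_of_mul_eq_one_right h.symm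

lemma fIm_neg (x : AddCircle (1:ℝ)) : fIm (-x) = - fIm x := by
  unfold fIm
  rw [toCircle_neg, Circle.coe_inv_eq_conj]
  simp

lemma fIm_eq_zero (x : AddCircle (1:ℝ)) (h : fIm x = 0) :
    x = 0 ∨ x = ((1/2 : ℝ) : AddCircle (1:ℝ)) := by
  set c := AddCircle.toCircle x with hc
  have habs : ‖(c : ℂ)‖ = 1 := Circle.norm_coe c
  have him : (c : ℂ).im = 0 := h
  have h2 : (c : ℂ).re ^ 2 = 1 := by
    have := Complex.sq_norm (c : ℂ)
    rw [habs, Complex.normSq_apply, him] at this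
    nlinarith
  have hre : (c : ℂ).re = 1 ∨ (c : ℂ).re = -1 := sq_eq_one_iff.mp h2
  have hinj := AddCircle.injective_toCircle (T := (1:ℝ)) one_ne_zero
  rcases hre with h1 | h1
  · left
    apply hinj
    rw [AddCircle.toCircle_zero, ← hc]
    ext
    simp only [Circle.coe_one]
    exact Complex.ext h1 him
  · right
    apply hinj
    rw [← hc]
    have : AddCircle.toCircle (((1/2:ℝ) : AddCircle (1:ℝ))) = Circle.exp Real.pi := by
      rw [AddCircle.toCircle_apply_mk]
      norm_num
      congr 1
      ring
    rw [this]
    ext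
    rw [Circle.coe_exp]
    push_cast
    rw [Complex.exp_pi_mul_I]
    exact Complex.ext (by simpa using h1) (by simpa using him)

lemma lat_I (n : ℤ) : (n : ℂ) * Complex.I ∈ GaussianLattice := by
  have h : Complex.I ∈ GaussianLattice :=
    AddSubgroup.subset_closure (by simp)
  simpa [zsmul_eq_mul] using AddSubgroup.zsmul_mem GaussianLattice h n

lemma torusConj_mk (z : ℂ) :
    torusConj (QuotientAddGroup.mk z) = QuotientAddGroup.mk ((starRingEnd ℂ) z) := rfl

lemma key_zero (x : Torus) (h : fIm (torusIm x) = 0) : torusConj x = x := by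
  induction x using QuotientAddGroup.induction_on with
  | H z =>
    rw [torusIm_mk] at h
    rw [torusConj_mk]
    rcases fIm_eq_zero _ h with h0 | h0
    · obtain ⟨n, hn⟩ := (AddCircle.coe_eq_zero_iff (1:ℝ)).mp h0
      apply (QuotientAddGroup.eq (s := GaussianLattice)).mpr
      have : -(starRingEnd ℂ) z + z = ((2*n : ℤ) : ℂ) * Complex.I := by
        apply Complex.ext <;>
          simp [Complex.add_im, Complex.add_re, mul_comm] <;>
          push_cast <;>
          (have hn' : (n:ℝ) = z.im := by simpa [zsmul_eq_mul] using hn) <;> linarith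
      rw [this]; exact lat_I _
    · have h1 : ((z.im - 1/2 : ℝ) : AddCircle (1:ℝ)) = 0 := by
        have : ((z.im - 1/2 : ℝ) : AddCircle (1:ℝ))
            = (z.im : AddCircle (1:ℝ)) - ((1/2:ℝ) : AddCircle (1:ℝ)) :=
          (QuotientAddGroup.mk' (AddSubgroup.zmultiples (1:ℝ))).map_sub z.im (1/2)
        rw [this, h0, sub_self]
      obtain ⟨n, hn⟩ := (AddCircle.coe_eq_zero_iff (1:ℝ)).mp h1
      apply (QuotientAddGroup.eq (s := GaussianLattice)).mpr
      have : -(starRingEnd ℂ) z + z = ((2*n + 1 : ℤ) : ℂ) * Complex.I := by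
        apply Complex.ext <;>
          simp [Complex.add_im, Complex.add_re, mul_comm] <;>
          push_cast <;>
          (have hn' : (n:ℝ) = z.im - 1/2 := by simpa [zsmul_eq_mul] using hn) <;> linarith
      rw [this]; exact lat_I _

lemma key_neg (x : Torus) : torusIm (torusConj x) = - torusIm x := by
  induction x using QuotientAddGroup.induction_on with
  | H z =>
    rw [torusConj_mk, torusIm_mk, torusIm_mk]
    have : ((starRingEnd ℂ) z).im = -z.im := Complex.conj_im z
    rw [this]
    exact (QuotientAddGroup.mk' (AddSubgroup.zmultiples (1:ℝ))).map_neg z.im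


theorem no_antipodal_invariant_curve :
    ¬ ∃ γ : C(AddCircle (1 : ℝ), Torus),
        Function.Injective γ ∧
        ¬ γ.Nullhomotopic ∧
        torusConj '' Set.range γ = Set.range γ ∧
        ∀ x ∈ Set.range γ, torusConj x ≠ x := by
  rintro ⟨γ, -, -, hrange, hfree⟩
  set g : Torus → ℝ := fun x => fIm (torusIm x) with hg
  have hgc : Continuous g := continuous_fIm.comp continuous_torusIm
  have hx0 : γ 0 ∈ Set.range γ := Set.mem_range_self 0
  have hx0' : torusConj (γ 0) ∈ Set.range γ := by
    rw [← hrange]; exact Set.mem_image_of_mem _ hx0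
  have hgneg : g (torusConj (γ 0)) = - g (γ 0) := by
    rw [hg]; simp only; rw [key_neg, fIm_neg]
  have hconn : IsPreconnected (g '' Set.range γ) := by
    rw [← Set.range_comp]
    exact isPreconnected_range (hgc.comp γ.continuous)
  have h1 : g (γ 0) ∈ g '' Set.range γ := Set.mem_image_of_mem g hx0
  have h2 : - g (γ 0) ∈ g '' Set.range γ := hgneg ▸ Set.mem_image_of_mem g hx0'
  have h0 : (0:ℝ) ∈ g '' Set.range γ := by
    rcases le_total (g (γ 0)) 0 with hle | hle
    · exact hconn.Icc_subset h1 h2 ⟨hle, by linarith⟩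
    · exact hconn.Icc_subset h2 h1 ⟨by linarith, hle⟩
  obtain ⟨x, hxA, hgx⟩ := h0
  exact hfree x hxA (key_zero x hgx)

end
end
end

section
/- Let Λ = ℤv₁ + ℤv₂ with v₁ = (1/√2)(1+i), v₂ = (1/√2)(1−i), and c the conjugation-induced real structure on ℂ/Λ (one real component). Then the quotient (ℂ/Λ)/c is homeomorphic to a Möbius band. -/
/-!
STATEMENT 12: let Λ = ℤv₁ + ℤv₂ with v₁ = (1+i)/√2, v₂ = (1−i)/√2, and let c be the
conjugation-induced real structure on ℂ/Λ (one real component).  Then the quotient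
(ℂ/Λ)/c is homeomorphic to a Möbius band.
-/

noncomputable section
noncomputable section

/-- v₁ = (1 + i)/√2. -/
def v₁ : ℂ := (1 + Complex.I) / (Real.sqrt 2 : ℂ)

/-- v₂ = (1 − i)/√2. -/
def v₂ : ℂ := (1 - Complex.I) / (Real.sqrt 2 : ℂ)

/-- The lattice Λ = ℤv₁ + ℤv₂. -/
def Lambda : AddSubgroup ℂ := AddSubgroup.closure {v₁, v₂}

/-- The torus ℂ/Λ. -/
abbrev TorusL : Type := ℂ ⧸ Lambda

lemma conj_v₁ : conjHom v₁ = v₂ := by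
  simp only [conjHom, AddMonoidHom.mk'_apply, v₁, v₂, map_div₀, map_add, map_one,
    Complex.conj_I, Complex.conj_ofReal]
  ring

lemma conj_v₂ : conjHom v₂ = v₁ := by
  simp only [conjHom, AddMonoidHom.mk'_apply, v₁, v₂, map_div₀, map_sub, map_one,
    Complex.conj_I, Complex.conj_ofReal]
  ring

lemma conj_maps_Lambda : Lambda ≤ Lambda.comap conjHom := by
  rw [Lambda, AddSubgroup.closure_le]
  rintro z hz
  simp only [Set.mem_insert_iff, Set.mem_singleton_iff] at hz
  rcases hz with rfl | rfl
  · refine AddSubgroup.mem_comap.mpr ?_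
    rw [conj_v₁]
    exact AddSubgroup.subset_closure (k := ({v₁, v₂} : Set ℂ)) (by simp)
  · refine AddSubgroup.mem_comap.mpr ?_
    rw [conj_v₂]
    exact AddSubgroup.subset_closure (k := ({v₁, v₂} : Set ℂ)) (by simp)

/-- The real structure on ℂ/Λ induced by complex conjugation. -/
def torusLConj : TorusL → TorusL :=
  QuotientAddGroup.map Lambda Lambda conjHom conj_maps_Lambda

/-- The Möbius band: `(ℝ × [-1,1]) / ((x,y) ~ (x+1,-y))`. -/
abbrev MobiusBand : Type :=
  Quot (fun p q : ℝ × (Set.Icc (-1 : ℝ) 1) => q.1 = p.1 + 1 ∧ (q.2 : ℝ) = -(p.2 : ℝ))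

open Real

lemma s_pos : (0:ℝ) < Real.sqrt 2 := Real.sqrt_pos.mpr (by norm_num)
lemma s_ne : (Real.sqrt 2:ℝ) ≠ 0 := ne_of_gt s_pos
lemma sC_ne : ((Real.sqrt 2:ℝ):ℂ) ≠ 0 := by exact_mod_cast s_ne
lemma s_mul_s : Real.sqrt 2 * Real.sqrt 2 = 2 := Real.mul_self_sqrt (by norm_num)

lemma v1_re : v₁.re = (Real.sqrt 2)⁻¹ := by simp [v₁]
lemma v1_im : v₁.im = (Real.sqrt 2)⁻¹ := by simp [v₁]
lemma v2_re : v₂.re = (Real.sqrt 2)⁻¹ := by simp [v₂]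
lemma v2_im : v₂.im = -(Real.sqrt 2)⁻¹ := by simp [v₂, neg_div, one_div]

def mpt (x y : ℝ) (h : y ∈ Set.Icc (-1:ℝ) 1) : MobiusBand := Quot.mk _ (x, ⟨y, h⟩)

lemma mpt_congr {x x' y y' : ℝ} {h h'} (hx : x = x') (hy : y = y') :
    mpt x y h = mpt x' y' h' := by subst hx; subst hy; rfl

lemma mpt_step {x x' y y' : ℝ} {h h'} (hx : x' = x + 1) (hy : y' = -y) :
    mpt x y h = mpt x' y' h' := by
  subst hx
  have : (⟨y', h'⟩ : Set.Icc (-1:ℝ) 1) = ⟨-y, by rw [← hy]; exact h'⟩ := by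
    exact Subtype.ext hy
  rw [mpt, mpt, this]
  exact Quot.sound ⟨rfl, rfl⟩

lemma cosmem (t : ℝ) : Real.cos t ∈ Set.Icc (-1:ℝ) 1 :=
  ⟨Real.neg_one_le_cos t, Real.cos_le_one t⟩

def F (z : ℂ) : MobiusBand :=
  mpt (Real.sqrt 2 * z.re) (Real.cos (π * (Real.sqrt 2 * z.im))) (cosmem _)

lemma F_add_v₁ (z : ℂ) : F (z + v₁) = F z := by
  have hx : Real.sqrt 2 * (z + v₁).re = Real.sqrt 2 * z.re + 1 := by
    rw [Complex.add_re, v1_re]; field_simp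
  have hy : Real.cos (π * (Real.sqrt 2 * (z + v₁).im))
      = -Real.cos (π * (Real.sqrt 2 * z.im)) := by
    have : Real.sqrt 2 * (z + v₁).im = Real.sqrt 2 * z.im + 1 := by
      rw [Complex.add_im, v1_im]; field_simp
    rw [this, mul_add, mul_one, Real.cos_add_pi]
  exact (mpt_step hx hy).symm

lemma F_add_v₂ (z : ℂ) : F (z + v₂) = F z := by
  have hx : Real.sqrt 2 * (z + v₂).re = Real.sqrt 2 * z.re + 1 := by
    rw [Complex.add_re, v2_re]; field_simp
  have hy : Real.cos (π * (Real.sqrt 2 * (z + v₂).im))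
      = -Real.cos (π * (Real.sqrt 2 * z.im)) := by
    have : Real.sqrt 2 * (z + v₂).im = Real.sqrt 2 * z.im - 1 := by
      rw [Complex.add_im, v2_im]; field_simp; ring
    rw [this, mul_sub, mul_one, Real.cos_sub_pi]
  exact (mpt_step hx hy).symm

lemma F_add_lambda {l : ℂ} (hl : l ∈ Lambda) : ∀ z : ℂ, F (z + l) = F z := by
  induction hl using AddSubgroup.closure_induction with
  | mem x hx =>
      rcases hx with rfl | rfl
      · exact F_add_v₁
      · exact F_add_v₂
  | zero => intro z; simp
  | add x y hx hy px py =>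
      intro z
      rw [← add_assoc, py, px]
  | neg x hx px =>
      intro z
      have := px (z + -x)
      simpa using this.symm


lemma F_conj (z : ℂ) : F (conjHom z) = F z := by
  refine mpt_congr ?_ ?_
  · simp [conjHom]
  · have : (conjHom z).im = -z.im := by simp [conjHom]
    rw [this]
    rw [show Real.sqrt 2 * -z.im = -(Real.sqrt 2 * z.im) by ring, mul_neg, Real.cos_neg]

def FT : TorusL → MobiusBand :=
  Quotient.lift F (by
    intro a b h
    have h' := QuotientAddGroup.leftRel_apply.mp h
    have := F_add_lambda h' a
    rw [add_neg_cancel_left] at this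
    exact this.symm)

lemma FT_mk (z : ℂ) : FT (QuotientAddGroup.mk z) = F z := rfl

lemma FT_sound : ∀ p q : TorusL, q = torusLConj p → FT p = FT q := by
  intro p q hq
  subst hq
  induction p using QuotientAddGroup.induction_on with
  | H z =>
    have h1 : torusLConj (QuotientAddGroup.mk z) = QuotientAddGroup.mk (conjHom z) :=
      QuotientAddGroup.map_mk Lambda Lambda conjHom conj_maps_Lambda z
    rw [h1, FT_mk, FT_mk, F_conj]

abbrev QuotC : Type := Quot (fun p q : TorusL => q = torusLConj p)

def Fq : QuotC → MobiusBand := Quot.lift FT FT_sound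

def Gc (p : ℝ × (Set.Icc (-1:ℝ) 1)) : ℂ :=
  ((p.1 : ℂ) + ((Real.arccos p.2 / π : ℝ) : ℂ) * Complex.I) / (Real.sqrt 2 : ℂ)

lemma Gc_step (p q : ℝ × (Set.Icc (-1:ℝ) 1)) (h1 : q.1 = p.1 + 1)
    (h2 : (q.2 : ℝ) = -(p.2 : ℝ)) : Gc q = conjHom (Gc p) + v₁ := by
  have ha : Real.arccos q.2 / π = 1 - Real.arccos p.2 / π := by
    rw [h2, Real.arccos_neg]
    field_simp
  rw [Gc, Gc, h1, ha]
  simp only [conjHom, AddMonoidHom.mk'_apply, map_div₀, map_add, map_mul,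
    Complex.conj_ofReal, Complex.conj_I, v₁]
  push_cast
  field_simp
  ring

def Gq : MobiusBand → QuotC :=
  Quot.lift (fun p => Quot.mk _ (QuotientAddGroup.mk (Gc p) : TorusL)) (by
    rintro p q ⟨h1, h2⟩
    refine Quot.sound ?_
    show (QuotientAddGroup.mk (Gc q) : TorusL) = torusLConj (QuotientAddGroup.mk (Gc p))
    rw [torusLConj, QuotientAddGroup.map_mk, Gc_step p q h1 h2]
    refine (QuotientAddGroup.eq).mpr ?_
    have : -(conjHom (Gc p) + v₁) + conjHom (Gc p) = -v₁ := by ring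
    rw [this]
    exact neg_mem (AddSubgroup.subset_closure (by simp)))


lemma v_sub : v₁ - v₂ = (2 * Complex.I) / (Real.sqrt 2 : ℂ) := by
  rw [v₁, v₂]; field_simp; ring

lemma mul_vsub_mem (k : ℤ) : (k : ℂ) * (v₁ - v₂) ∈ Lambda := by
  have h1 : v₁ ∈ Lambda := AddSubgroup.subset_closure (by simp)
  have h2 : v₂ ∈ Lambda := AddSubgroup.subset_closure (by simp)
  have := AddSubgroup.zsmul_mem Lambda (sub_mem h1 h2) k
  simpa [zsmul_eq_mul] using this

lemma Fq_Gq (m : MobiusBand) : Fq (Gq m) = m := by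
  induction m using Quot.ind with
  | mk p =>
    obtain ⟨x, y, hy⟩ := p
    show F (Gc (x, ⟨y, hy⟩)) = Quot.mk _ (x, ⟨y, hy⟩)
    have hre : (Gc (x, ⟨y, hy⟩)).re = x / Real.sqrt 2 := by simp [Gc]
    have him : (Gc (x, ⟨y, hy⟩)).im = (Real.arccos y / π) / Real.sqrt 2 := by simp [Gc]
    have hx : Real.sqrt 2 * (Gc (x, ⟨y, hy⟩)).re = x := by rw [hre]; field_simp
    have hyy : Real.cos (π * (Real.sqrt 2 * (Gc (x, ⟨y, hy⟩)).im)) = y := by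
      rw [him, show Real.sqrt 2 * (Real.arccos y / π / Real.sqrt 2) = Real.arccos y / π by
        field_simp, show π * (Real.arccos y / π) = Real.arccos y by
        field_simp, Real.cos_arccos hy.1 hy.2]
    exact mpt_congr hx hyy

lemma Gq_Fq (q : QuotC) : Gq (Fq q) = q := by
  induction q using Quot.ind with
  | mk p =>
    induction p using QuotientAddGroup.induction_on with
    | H z =>
      set x : ℝ := Real.sqrt 2 * z.re with hxdef
      set w : ℝ := Real.sqrt 2 * z.im with hwdef
      show Quot.mk _ (QuotientAddGroup.mk (Gc (x, ⟨Real.cos (π * w), cosmem _⟩)) : TorusL)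
        = Quot.mk _ (QuotientAddGroup.mk z : TorusL)
      set k : ℤ := ⌊(w + 1) / 2⌋ with hkdef
      set t : ℝ := w - 2 * k with htdef
      have ht1 : -1 ≤ t := by
        have := Int.floor_le ((w + 1) / 2)
        rw [← hkdef] at this
        rw [htdef]; linarith
      have ht2 : t < 1 := by
        have := Int.lt_floor_add_one ((w + 1) / 2)
        rw [← hkdef] at this
        rw [htdef]; linarith
      have htabs : |t| ≤ 1 := abs_le.mpr ⟨ht1, le_of_lt ht2⟩
      have hcos : Real.cos (π * w) = Real.cos (π * t) := by
        have hpw : π * w = π * t + (k : ℝ) * (2 * π) := by rw [htdef]; ring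
        rw [hpw, Real.cos_add_int_mul_two_pi]
      have harc : Real.arccos (Real.cos (π * w)) = π * |t| := by
        have habs : Real.cos (π * t) = Real.cos (π * |t|) := by
          rcases abs_choice t with h | h
          · rw [h]
          · rw [h, mul_neg, Real.cos_neg]
        rw [hcos, habs, Real.arccos_cos (by positivity)
          (by nlinarith [Real.pi_pos])]
      have harc' : Real.arccos (Real.cos (π * w)) / π = |t| := by
        rw [harc]; field_simp
      have hGc : Gc (x, ⟨Real.cos (π * w), cosmem _⟩)
          = ((x : ℂ) + ((|t| : ℝ) : ℂ) * Complex.I) / ((Real.sqrt 2 : ℝ) : ℂ) := by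
        rw [Gc]; norm_num [harc']
      rw [hGc]
      rcases abs_choice t with h | h
      · -- |t| = t : the point is z translated by a lattice vector
        rw [h]
        refine congrArg (Quot.mk _) ?_
        refine (QuotientAddGroup.eq).mpr ?_
        have key : -(((x : ℂ) + ((t : ℝ) : ℂ) * Complex.I) / ((Real.sqrt 2 : ℝ) : ℂ)) + z
            = (k : ℂ) * (v₁ - v₂) := by
          rw [v_sub, htdef, hwdef, hxdef]
          push_cast
          field_simp
          linear_combination (-((Real.sqrt 2 : ℝ) : ℂ)) * (Complex.re_add_im z)
        rw [key]
        exact mul_vsub_mem k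
      · -- |t| = -t : the point is conj z translated by a lattice vector
        rw [h]
        refine (Quot.sound ?_).symm
        show (QuotientAddGroup.mk _ : TorusL) = torusLConj (QuotientAddGroup.mk z)
        rw [torusLConj, QuotientAddGroup.map_mk]
        refine ((QuotientAddGroup.eq).mpr ?_).symm
        have key : -(conjHom z) + (((x : ℂ) + ((-t : ℝ) : ℂ) * Complex.I)
            / ((Real.sqrt 2 : ℝ) : ℂ)) = (k : ℂ) * (v₁ - v₂) := by
          have hconj : conjHom z = (z.re : ℂ) - (z.im : ℂ) * Complex.I := by
            simp [conjHom, Complex.ext_iff]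
          rw [v_sub, hconj, htdef, hwdef, hxdef]
          push_cast
          field_simp
          ring
        rw [key]
        exact mul_vsub_mem k


lemma continuous_F : Continuous F := by
  have h : Continuous fun z : ℂ =>
      ((Real.sqrt 2 * z.re, ⟨Real.cos (π * (Real.sqrt 2 * z.im)), cosmem _⟩) :
        ℝ × Set.Icc (-1:ℝ) 1) := by
    refine Continuous.prodMk (continuous_const.mul Complex.continuous_re)
      (Continuous.subtype_mk ?_ _)
    exact Real.continuous_cos.comp
      (continuous_const.mul (continuous_const.mul Complex.continuous_im))
  exact continuous_quot_mk.comp h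

lemma continuous_FT : Continuous FT := Continuous.quotient_lift continuous_F _

lemma continuous_Fq : Continuous Fq := continuous_quot_lift _ continuous_FT

lemma continuous_Gc : Continuous Gc := by
  refine Continuous.div_const (Continuous.add ?_ (Continuous.mul ?_ continuous_const)) _
  · exact Complex.continuous_ofReal.comp continuous_fst
  · exact Complex.continuous_ofReal.comp
      ((Real.continuous_arccos.comp (continuous_subtype_val.comp continuous_snd)).div_const π)

lemma continuous_Gq : Continuous Gq :=
  continuous_quot_lift _
    (continuous_quot_mk.comp (QuotientAddGroup.continuous_mk.comp continuous_Gc))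

theorem quotient_is_mobius_band :
    Nonempty (Quot (fun p q : TorusL => q = torusLConj p) ≃ₜ MobiusBand) :=
  ⟨⟨⟨Fq, Gq, Gq_Fq, Fq_Gq⟩, continuous_Fq, continuous_Gq⟩⟩

end
end
end
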